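/- Let d ≥ 2, δ > 0, Z the δ-grid on a box [a,b] ⊆ ℝ^d, and f : Z → {-1,0,1}^d positive-switching, δ-continuous, with f_i weakly decreasing in x_j for all i ≠ j. Fix a coordinate hyperplane value y_d (a grid value of the last coordinate), and suppose y = (y_1,…,y_{d-1},y_d) is a grid point with f_j(y) = 0 for all j ∈ {1,…,d-1} and f_d(y) < 0. Then f restricted to the sub-box [y, b] ∩ Z is positive-switching on [y, b]. -/
import Mathlib


/-- Membership in the δ-grid on the box `[a,b]`. -/
def onGrid {n : ℕ} (a b : Fin n → ℝ) (δ : ℝ) (x : Fin n → ℝ) : Prop :=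
  ∀ i, (∃ k : ℕ, x i = a i + k * δ) ∧ x i ≤ b i

/-- Case 2 of the recursive algorithm for Theorem 1.5 (dimension `d + 1 ≥ 2`):
if `y` is a grid point with `f_j(y) = 0` for all non-last coordinates `j` and
`f_d(y) < 0`, then `f` restricted to the sub-box `[y,b]` is positive-switching:
`x_i = y_i` implies `f_i(x) ≤ 0` and `x_i = b_i` implies `f_i(x) ≥ 0`. -/
theorem subbox_positive_switching {d : ℕ} (hd : 1 ≤ d) (δ : ℝ) (hδ : 0 < δ)
    (a b : Fin (d + 1) → ℝ) (hbox : ∀ i, ∃ m : ℕ, b i = a i + m * δ)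
    (f : (Fin (d + 1) → ℝ) → Fin (d + 1) → ℤ)
    (hval : ∀ x, onGrid a b δ x → ∀ i, f x i = -1 ∨ f x i = 0 ∨ f x i = 1)
    (hcont : ∀ x, onGrid a b δ x → ∀ j, onGrid a b δ (Function.update x j (x j + δ)) →
      ∀ i, |f (Function.update x j (x j + δ)) i - f x i| ≤ 1)
    (hmono : ∀ x x', onGrid a b δ x → onGrid a b δ x' →
      ∀ j, (∀ k, k ≠ j → x' k = x k) → x j ≤ x' j → ∀ i, i ≠ j → f x' i ≤ f x i)
    (hswitch : ∀ x, onGrid a b δ x →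
      ∀ i, (x i = a i → f x i ≤ 0) ∧ (x i = b i → 0 ≤ f x i))
    (y : Fin (d + 1) → ℝ) (hy : onGrid a b δ y)
    (hyzero : ∀ j, j ≠ Fin.last d → f y j = 0)
    (hyneg : f y (Fin.last d) < 0) :
    ∀ x, onGrid a b δ x → (∀ i, y i ≤ x i) →
      ∀ i, (x i = y i → f x i ≤ 0) ∧ (x i = b i → 0 ≤ f x i) := by
  intro x hx hle i
  constructor
  · intro hxi
    -- key: f x i ≤ f y i by moving coordinates one at a time
    set z : Finset (Fin (d + 1)) → (Fin (d + 1) → ℝ) :=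
      fun s j => if j ∈ s then x j else y j with hz
    have hzgrid : ∀ s, onGrid a b δ (z s) := by
      intro s j
      simp only [hz]
      by_cases h : j ∈ s <;> simp [h] <;> [exact hx j; exact hy j]
    have key : ∀ s : Finset (Fin (d + 1)), i ∉ s → f (z s) i ≤ f y i := by
      intro s
      induction s using Finset.induction with
      | empty =>
        intro _
        have : z ∅ = y := by funext j; simp [hz]
        rw [this]
      | @insert j s hjs ih =>
        intro hins
        have hij : i ≠ j := fun h => hins (by simp [h])
        have his : i ∉ s := fun h => hins (Finset.mem_insert_of_mem h)
        have hupd : z (insert j s) = Function.update (z s) j (x j) := by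
          funext k
          by_cases hk : k = j
          · subst hk; simp [hz, Function.update, hjs]
          · simp [hz, Function.update, hk, Finset.mem_insert]
        have := hmono (z s) (z (insert j s)) (hzgrid s) (hzgrid (insert j s)) j
          (by intro k hk; rw [hupd]; simp [Function.update, hk])
          (by simp [hz, hjs]; exact hle j) i hij
        exact le_trans this (ih his)
    have hzx : z (Finset.univ.erase i) = x := by
      funext k
      by_cases hk : k = i
      · subst hk; simp [hz, hxi]
      · simp [hz, hk]
    have hfx : f x i ≤ f y i := by
      rw [← hzx]; exact key _ (by simp)
    by_cases hi : i = Fin.last d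
    · subst hi; exact le_of_lt (lt_of_le_of_lt hfx hyneg)
    · rw [hyzero i hi] at hfx; exact hfx
  · intro hxb
    exact (hswitch x hx i).2 hxb
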